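/- Let E be a real normed vector space, U ⊆ E open, and let A : E → E → ℍ be twice continuously differentiable in the first variable and linear in the second, with imaginary values. Define F : E → E → E → ℍ by F x (v, w) := fderiv ℝ (fun y => A y w) x v − fderiv ℝ (fun y => A y v) x w + (A x v)*(A x w) − (A x w)*(A x v). Then the Bianchi identity d_A F_A = 0 holds in the trivialization: for every x ∈ U and u, v, w ∈ E, (fderiv ℝ (fun y => F y (v, w)) x u + [A x u, F x (v, w)]) + (fderiv ℝ (fun y => F y (w, u)) x v + [A x v, F x (w, u)]) + (fderiv ℝ (fun y => F y (u, v)) x w + [A x w, F x (u, v)]) = 0, where [p, q] := p*q − q*p. -/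

import Mathlib

/-- The Bianchi identity `d_A F_A = 0` in a trivialization: for an imaginary-quaternion-valued
connection one-form `A` (of class `C²` in the base point, linear in the direction) with
curvature `F = dA + A ∧ A`, the cyclic sum of `dF(u; v, w) + [A(u), F(v, w)]` vanishes. -/
theorem bianchi_identity {E : Type*} [NormedAddCommGroup E] [NormedSpace ℝ E]
    (U : Set E) (hU : IsOpen U)
    (A : E → E → Quaternion ℝ)
    (hAsmooth : ∀ v : E, ContDiffOn ℝ 2 (fun y => A y v) U)
    (hAlin : ∀ x, IsLinearMap ℝ (A x))
    (hAim : ∀ x v, (A x v).re = 0)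
    (F : E → E × E → Quaternion ℝ)
    (hF : ∀ x v w, F x (v, w) =
      fderiv ℝ (fun y => A y w) x v - fderiv ℝ (fun y => A y v) x w
        + A x v * A x w - A x w * A x v) :
    ∀ x ∈ U, ∀ u v w : E,
      (fderiv ℝ (fun y => F y (v, w)) x u
          + (A x u * F x (v, w) - F x (v, w) * A x u))
        + (fderiv ℝ (fun y => F y (w, u)) x v
          + (A x v * F x (w, u) - F x (w, u) * A x v))
        + (fderiv ℝ (fun y => F y (u, v)) x w
          + (A x w * F x (u, v) - F x (u, v) * A x w)) = 0 := by
  intro x hx u v w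
  have hmem : U ∈ nhds x := hU.mem_nhds hx
  have hg : ∀ a : E, ContDiffAt ℝ 2 (fun y => A y a) x :=
    fun a => (hAsmooth a).contDiffAt hmem
  have hd1 : ∀ a : E, HasFDerivAt (fun y => A y a) (fderiv ℝ (fun y => A y a) x) x :=
    fun a => ((hg a).differentiableAt (by norm_num)).hasFDerivAt
  have hd2 : ∀ a : E, HasFDerivAt (fderiv ℝ (fun y => A y a))
      (fderiv ℝ (fderiv ℝ (fun y => A y a)) x) x := fun a =>
    ((((hg a).fderiv_right (m := 1) (by norm_num)).differentiableAt one_ne_zero)).hasFDerivAt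
  have happ : ∀ a c : E, HasFDerivAt (fun y => fderiv ℝ (fun z => A z c) y a)
      ((ContinuousLinearMap.apply ℝ (Quaternion ℝ) a).comp
        (fderiv ℝ (fderiv ℝ (fun y => A y c)) x)) x := fun a c =>
    ((ContinuousLinearMap.apply ℝ (Quaternion ℝ) a).hasFDerivAt).comp x (hd2 c)
  have key : ∀ a b : E, HasFDerivAt (fun y => F y (a, b))
      ((ContinuousLinearMap.apply ℝ (Quaternion ℝ) a).comp
          (fderiv ℝ (fderiv ℝ (fun y => A y b)) x)
        - (ContinuousLinearMap.apply ℝ (Quaternion ℝ) b).comp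
          (fderiv ℝ (fderiv ℝ (fun y => A y a)) x)
        + (A x a • fderiv ℝ (fun y => A y b) x
            + (fderiv ℝ (fun y => A y a) x).smulRight (A x b))
        - (A x b • fderiv ℝ (fun y => A y a) x
            + (fderiv ℝ (fun y => A y b) x).smulRight (A x a))) x := by
    intro a b
    have heq : (fun y => F y (a, b)) = fun y =>
        fderiv ℝ (fun z => A z b) y a - fderiv ℝ (fun z => A z a) y b
          + A y a * A y b - A y b * A y a := by
      funext y; exact hF y a b
    rw [heq]
    exact (((happ a b).sub (happ b a)).add ((hd1 a).mul' (hd1 b))).sub ((hd1 b).mul' (hd1 a))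
  have keyval : ∀ a b c : E, fderiv ℝ (fun y => F y (a, b)) x c =
      fderiv ℝ (fderiv ℝ (fun y => A y b)) x c a
        - fderiv ℝ (fderiv ℝ (fun y => A y a)) x c b
        + (A x a * fderiv ℝ (fun y => A y b) x c
            + fderiv ℝ (fun y => A y a) x c * A x b)
        - (A x b * fderiv ℝ (fun y => A y a) x c
            + fderiv ℝ (fun y => A y b) x c * A x a) := by
    intro a b c
    rw [(key a b).fderiv]
    simp [ContinuousLinearMap.smul_apply, smul_eq_mul, mul_comm]
  have sym : ∀ a b c : E, fderiv ℝ (fderiv ℝ (fun y => A y c)) x a b =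
      fderiv ℝ (fderiv ℝ (fun y => A y c)) x b a := fun a b c =>
    ((hg c).isSymmSndFDerivAt (by simp)) a b
  rw [keyval v w u, keyval w u v, keyval u v w, hF x v w, hF x w u, hF x u v,
    sym u v w, sym v w u, sym w u v]
  noncomm_ring
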